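/- (Interior points of the remainder set, step S² ⊆ S^i in the proof of Theorem 5.) Assume the avoidance hypothesis. Then for every u ∈ ℝ² with ‖u‖ < 1 and c·u₁ + d·u₂ ≠ 0, the point g(u) lies in the topological interior of the set S = {g(v) : v ∈ ℝ², ‖v‖ ≤ 1}. -/

import Mathlib

noncomputable section

/-- Matrix–vector multiplication, viewed as a map on the Euclidean plane. -/
def mv (M : Matrix (Fin 2) (Fin 2) ℝ) (u : EuclideanSpace ℝ (Fin 2)) :
    EuclideanSpace ℝ (Fin 2) := WithLp.toLp 2 (M.mulVec u)

/-- Range `r(p) = √((p₁−a)² + (p₂−b)²)` to the sensor located at `(a, b)`. -/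
def rr (a b : ℝ) (p : EuclideanSpace ℝ (Fin 2)) : ℝ :=
  Real.sqrt ((p 0 - a) ^ 2 + (p 1 - b) ^ 2)

/-- Bearing `θ(p)`: polar angle in `(−π, π]` of the complex number `(p₁−a) + i(p₂−b)`. -/
def theta (a b : ℝ) (p : EuclideanSpace ℝ (Fin 2)) : ℝ :=
  Complex.arg ⟨p 0 - a, p 1 - b⟩

/-- Jacobian matrix of the range–bearing measurement map at `p`. -/
def Jh (a b : ℝ) (p : EuclideanSpace ℝ (Fin 2)) : Matrix (Fin 2) (Fin 2) ℝ :=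
  !![(p 0 - a) / rr a b p, (p 1 - b) / rr a b p;
     -(p 1 - b) / (rr a b p) ^ 2, (p 0 - a) / (rr a b p) ^ 2]

/-- The range–bearing measurement map `h(p) = (r(p), θ(p))`. -/
def hMeas (a b : ℝ) (p : EuclideanSpace ℝ (Fin 2)) : EuclideanSpace ℝ (Fin 2) :=
  WithLp.toLp 2 ![rr a b p, theta a b p]

/-- The linearization remainder `g(u) = h(x + Eu) − h(x) − J_h(x)·(Eu)`. -/
def gRem (a b : ℝ) (x : EuclideanSpace ℝ (Fin 2)) (E : Matrix (Fin 2) (Fin 2) ℝ)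
    (u : EuclideanSpace ℝ (Fin 2)) : EuclideanSpace ℝ (Fin 2) :=
  hMeas a b (x + mv E u) - hMeas a b x - mv (Jh a b x) (mv E u)

abbrev V := EuclideanSpace ℝ (Fin 2)

def ML (M : Matrix (Fin 2) (Fin 2) ℝ) : V →L[ℝ] V :=
  LinearMap.toContinuousLinearMap (Matrix.toEuclideanLin M)

lemma ML_apply (M : Matrix (Fin 2) (Fin 2) ℝ) (v : V) (i : Fin 2) :
    ML M v i = M i 0 * v 0 + M i 1 * v 1 := by
  show M.mulVec v i = _
  simp [Matrix.mulVec, dotProduct, Fin.sum_univ_two]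

def pr0 : V →L[ℝ] ℝ := EuclideanSpace.proj (0 : Fin 2)
def pr1 : V →L[ℝ] ℝ := EuclideanSpace.proj (1 : Fin 2)
@[simp] lemma pr0_apply (v : V) : pr0 v = v 0 := rfl
@[simp] lemma pr1_apply (v : V) : pr1 v = v 1 := rfl

lemma rr_pos (a b : ℝ) (p : V) (hq : 0 < (p 0 - a) ^ 2 + (p 1 - b) ^ 2) :
    0 < rr a b p := Real.sqrt_pos.mpr hq

lemma rr_sq (a b : ℝ) (p : V) (hq : 0 ≤ (p 0 - a) ^ 2 + (p 1 - b) ^ 2) :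
    rr a b p ^ 2 = (p 0 - a) ^ 2 + (p 1 - b) ^ 2 := Real.sq_sqrt hq

theorem rr_hasStrictFDerivAt (a b : ℝ) (p : V)
    (hq : 0 < (p 0 - a) ^ 2 + (p 1 - b) ^ 2) :
    HasStrictFDerivAt (rr a b)
      (((p 0 - a) / rr a b p) • pr0 + ((p 1 - b) / rr a b p) • pr1) p := by
  have hr : 0 < rr a b p := rr_pos a b p hq
  have hproj0 : HasStrictFDerivAt (fun q : V => q 0) pr0 p :=
    ContinuousLinearMap.hasStrictFDerivAt pr0
  have hproj1 : HasStrictFDerivAt (fun q : V => q 1) pr1 p :=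
    ContinuousLinearMap.hasStrictFDerivAt pr1
  have hF1 := (((hproj0.sub_const a).mul (hproj0.sub_const a)).add
      ((hproj1.sub_const b).mul (hproj1.sub_const b)))
  have hF1p : (p 0 - a) * (p 0 - a) + (p 1 - b) * (p 1 - b) ≠ 0 := by nlinarith
  have hsqrt := (Real.hasStrictDerivAt_sqrt hF1p).comp_hasStrictFDerivAt p hF1
  have hfun : rr a b = fun q : V =>
      Real.sqrt ((q 0 - a) * (q 0 - a) + (q 1 - b) * (q 1 - b)) := by
    funext q; rw [rr]; congr 1; ring
  rw [hfun]
  refine hsqrt.congr_fderiv ?_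
  have hsq : Real.sqrt ((p 0 - a) * (p 0 - a) + (p 1 - b) * (p 1 - b)) = rr a b p := by
    rw [rr]; congr 1; ring
  ext v
  simp only [ContinuousLinearMap.smul_apply, ContinuousLinearMap.add_apply, smul_eq_mul, hsq]
  field_simp
  ring

theorem theta_hasStrictFDerivAt (a b : ℝ) (p : V) (hp : ¬(p 0 ≤ a ∧ p 1 = b)) :
    HasStrictFDerivAt (theta a b)
      ((-(p 1 - b) / rr a b p ^ 2) • pr0 + ((p 0 - a) / rr a b p ^ 2) • pr1) p := by
  have hq : 0 < (p 0 - a) ^ 2 + (p 1 - b) ^ 2 := by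
    by_contra h
    push_neg at h
    have h0 : p 0 - a = 0 ∧ p 1 - b = 0 := by
      constructor <;> nlinarith [sq_nonneg (p 0 - a), sq_nonneg (p 1 - b)]
    exact hp ⟨le_of_eq (by linarith [h0.1]), by linarith [h0.2]⟩
  have hr : 0 < rr a b p := rr_pos a b p hq
  have hr2 : rr a b p ^ 2 = (p 0 - a) ^ 2 + (p 1 - b) ^ 2 := rr_sq a b p hq.le
  set Lz : V →L[ℝ] ℂ := Complex.ofRealCLM.comp pr0
      + Complex.I • Complex.ofRealCLM.comp pr1 with hLzdef
  have hZ : HasStrictFDerivAt (fun q : V => Lz q - (↑a + ↑b * Complex.I)) Lz p :=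
    Lz.hasStrictFDerivAt.sub_const _
  have hLzre : ∀ q : V, (Lz q).re = q 0 := by
    intro q; simp [hLzdef, pr0, pr1]
  have hLzim : ∀ q : V, (Lz q).im = q 1 := by
    intro q; simp [hLzdef, pr0, pr1]
  have hZre : ∀ q : V, (Lz q - (↑a + ↑b * Complex.I)).re = q 0 - a := by
    intro q; simp [Complex.sub_re, Complex.add_re, hLzre]
  have hZim : ∀ q : V, (Lz q - (↑a + ↑b * Complex.I)).im = q 1 - b := by
    intro q; simp [Complex.sub_im, Complex.add_im, hLzim]
  have hslit : (Lz p - (↑a + ↑b * Complex.I)) ∈ Complex.slitPlane := by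
    rw [Complex.mem_slitPlane_iff, hZre, hZim]
    rcases not_and_or.mp hp with h | h
    · exact Or.inl (by push_neg at h; linarith)
    · exact Or.inr (fun hc => h (by linarith))
  have hnormSq : Complex.normSq (Lz p - (↑a + ↑b * Complex.I)) = rr a b p ^ 2 := by
    rw [Complex.normSq_apply, hZre, hZim, hr2]; ring
  have hlog := (Complex.hasStrictFDerivAt_log_real hslit).comp p hZ
  have hth := (ContinuousLinearMap.hasStrictFDerivAt Complex.imCLM).comp p hlog
  have hfun : theta a b = fun q : V =>
      Complex.imCLM (Complex.log (Lz q - (↑a + ↑b * Complex.I))) := by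
    funext q
    simp only [theta, Complex.imCLM_apply, Complex.log_im]
    congr 1
    apply Complex.ext
    · rw [hZre]
    · rw [hZim]
  rw [hfun]
  refine hth.congr_fderiv ?_
  ext v
  simp only [ContinuousLinearMap.coe_comp', Function.comp_apply,
    ContinuousLinearMap.smul_apply, ContinuousLinearMap.add_apply,
    ContinuousLinearMap.one_apply, Complex.imCLM_apply, smul_eq_mul]
  rw [Complex.mul_im, Complex.inv_re, Complex.inv_im, hLzre, hLzim, hZre, hZim, hnormSq]
  simp only [pr0_apply, pr1_apply]
  have hrne : rr a b p ^ 2 ≠ 0 := by positivity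
  field_simp
  ring

theorem hMeas_hasStrictFDerivAt (a b : ℝ) (p : V) (hp : ¬(p 0 ≤ a ∧ p 1 = b)) :
    HasStrictFDerivAt (hMeas a b) (ML (Jh a b p)) p := by
  have hq : 0 < (p 0 - a) ^ 2 + (p 1 - b) ^ 2 := by
    by_contra h
    push_neg at h
    have h0 : p 0 - a = 0 ∧ p 1 - b = 0 := by
      constructor <;> nlinarith [sq_nonneg (p 0 - a), sq_nonneg (p 1 - b)]
    exact hp ⟨le_of_eq (by linarith [h0.1]), by linarith [h0.2]⟩
  have h0 := rr_hasStrictFDerivAt a b p hq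
  have h1 := theta_hasStrictFDerivAt a b p hp
  have hG : HasStrictFDerivAt (fun q : V => (![rr a b q, theta a b q] : Fin 2 → ℝ))
      ((PiLp.continuousLinearEquiv 2 ℝ (fun _ : Fin 2 => ℝ)).toContinuousLinearMap
        ∘L ML (Jh a b p)) p := by
    apply hasStrictFDerivAt_pi'.mpr
    intro i
    fin_cases i
    · refine HasStrictFDerivAt.congr_fderiv h0 ?_
      ext v
      simp only [ContinuousLinearMap.coe_comp', Function.comp_apply,
        ContinuousLinearEquiv.coe_coe, ContinuousLinearMap.proj_apply,
        ContinuousLinearMap.smul_apply, ContinuousLinearMap.add_apply,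
        PiLp.continuousLinearEquiv_apply, smul_eq_mul,
        pr0_apply, pr1_apply, Fin.zero_eta, Fin.mk_one, ML_apply]
      simp [Jh]
    · refine HasStrictFDerivAt.congr_fderiv h1 ?_
      ext v
      simp only [ContinuousLinearMap.coe_comp', Function.comp_apply,
        ContinuousLinearEquiv.coe_coe, ContinuousLinearMap.proj_apply,
        ContinuousLinearMap.smul_apply, ContinuousLinearMap.add_apply,
        PiLp.continuousLinearEquiv_apply, smul_eq_mul,
        pr0_apply, pr1_apply, Fin.zero_eta, Fin.mk_one, ML_apply]
      simp [Jh]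
  have hcomp := ((PiLp.continuousLinearEquiv 2 ℝ (fun _ : Fin 2 => ℝ)).symm.toContinuousLinearMap
    ).hasStrictFDerivAt.comp p hG
  have hEq : ((PiLp.continuousLinearEquiv 2 ℝ (fun _ : Fin 2 => ℝ)).symm.toContinuousLinearMap)
      ∘L ((PiLp.continuousLinearEquiv 2 ℝ (fun _ : Fin 2 => ℝ)).toContinuousLinearMap
        ∘L ML (Jh a b p)) = ML (Jh a b p) := by
    ext v
    rfl
  exact (hcomp.congr_fderiv hEq :)

lemma ML_det (M : Matrix (Fin 2) (Fin 2) ℝ) : (ML M).det = M.det := by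
  show LinearMap.det _ = _
  rw [show ((ML M : V →ₗ[ℝ] V)) =
      Matrix.toLin (PiLp.basisFun 2 ℝ (Fin 2)) (PiLp.basisFun 2 ℝ (Fin 2)) M from rfl,
    LinearMap.det_toLin]

lemma det_diff_ne_zero (s r P0 P1 X0 X1 : ℝ) (hs : 0 < s) (hr : 0 < r)
    (hs2 : s ^ 2 = P0 ^ 2 + P1 ^ 2) (hr2 : r ^ 2 = X0 ^ 2 + X1 ^ 2)
    (hC : P0 * X1 - P1 * X0 ≠ 0) :
    (P0 / s - X0 / r) * (P0 / s ^ 2 - X0 / r ^ 2) -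
      (P1 / s - X1 / r) * (-P1 / s ^ 2 - -X1 / r ^ 2) ≠ 0 := by
  set D := P0 * X0 + P1 * X1 with hD
  have hLag : s ^ 2 * r ^ 2 = D ^ 2 + (P0 * X1 - P1 * X0) ^ 2 := by
    rw [hD]; linear_combination r ^ 2 * hs2 + (P0 ^ 2 + P1 ^ 2) * hr2
  have hCpos : 0 < (P0 * X1 - P1 * X0) ^ 2 :=
    lt_of_le_of_ne (sq_nonneg _) (Ne.symm (pow_ne_zero 2 hC))
  have hDpos : 0 < s * r - D := by
    nlinarith [hLag, hCpos, mul_pos hs hr, sq_nonneg (s * r - D), sq_nonneg (s * r + D)]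
  have hNval : (P0 * r - X0 * s) * (P0 * r ^ 2 - X0 * s ^ 2)
      + (P1 * r - X1 * s) * (P1 * r ^ 2 - X1 * s ^ 2) = s * r * (s + r) * (s * r - D) := by
    rw [hD]; linear_combination (-(r ^ 3)) * hs2 + (-(s ^ 3)) * hr2
  have hdet_eq : (P0 / s - X0 / r) * (P0 / s ^ 2 - X0 / r ^ 2) -
      (P1 / s - X1 / r) * (-P1 / s ^ 2 - -X1 / r ^ 2) =
      (s * r * (s + r) * (s * r - D)) / (s ^ 3 * r ^ 3) := by
    rw [← hNval]
    field_simp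
    ring
  rw [hdet_eq]
  positivity


set_option maxHeartbeats 2000000 in
/-- **Interior points of the remainder set.** Under the avoidance hypothesis, if `‖u‖ < 1`
and `c·u₁ + d·u₂ ≠ 0` then `g(u)` is in the interior of `S = {g(v) : ‖v‖ ≤ 1}`. -/
theorem gRem_mem_interior
    (a b : ℝ) (x : EuclideanSpace ℝ (Fin 2)) (E : Matrix (Fin 2) (Fin 2) ℝ)
    (hE : 0 < E.det)
    (havoid : ∀ u : EuclideanSpace ℝ (Fin 2), ‖u‖ ≤ 1 →
      ¬((x + mv E u) 0 ≤ a ∧ (x + mv E u) 1 = b))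
    (c d : ℝ)
    (hc : c = E 0 0 * (x 1 - b) - E 1 0 * (x 0 - a))
    (hd : d = E 0 1 * (x 1 - b) - E 1 1 * (x 0 - a)) :
    ∀ u : EuclideanSpace ℝ (Fin 2), ‖u‖ < 1 → c * u 0 + d * u 1 ≠ 0 →
      gRem a b x E u ∈ interior {y : EuclideanSpace ℝ (Fin 2) |
        ∃ v : EuclideanSpace ℝ (Fin 2), ‖v‖ ≤ 1 ∧ gRem a b x E v = y} := by
  intro u hu hcd
  set p : V := x + mv E u with hpdef
  have hpu : ¬(p 0 ≤ a ∧ p 1 = b) := havoid u hu.le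
  have hxx : ¬(x 0 ≤ a ∧ x 1 = b) := by
    have h := havoid 0 (by simp)
    have h0 : mv E 0 = (0 : EuclideanSpace ℝ (Fin 2)) := by simp [mv]
    rwa [h0, add_zero] at h
  -- coordinates
  have hqx : 0 < (x 0 - a) ^ 2 + (x 1 - b) ^ 2 := by
    by_contra h
    push_neg at h
    have h0 : x 0 - a = 0 ∧ x 1 - b = 0 := by
      constructor <;> nlinarith [sq_nonneg (x 0 - a), sq_nonneg (x 1 - b)]
    exact hxx ⟨le_of_eq (by linarith [h0.1]), by linarith [h0.2]⟩
  have hqp : 0 < (p 0 - a) ^ 2 + (p 1 - b) ^ 2 := by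
    by_contra h
    push_neg at h
    have h0 : p 0 - a = 0 ∧ p 1 - b = 0 := by
      constructor <;> nlinarith [sq_nonneg (p 0 - a), sq_nonneg (p 1 - b)]
    exact hpu ⟨le_of_eq (by linarith [h0.1]), by linarith [h0.2]⟩
  have hs : 0 < rr a b p := rr_pos a b p hqp
  have hrx : 0 < rr a b x := rr_pos a b x hqx
  have hs2 : rr a b p ^ 2 = (p 0 - a) ^ 2 + (p 1 - b) ^ 2 := rr_sq a b p hqp.le
  have hr2 : rr a b x ^ 2 = (x 0 - a) ^ 2 + (x 1 - b) ^ 2 := rr_sq a b x hqx.le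
  -- derivative of gRem at u
  have hdp := hMeas_hasStrictFDerivAt a b p hpu
  have hA : HasStrictFDerivAt (fun w : V => x + mv E w) (ML E) u :=
    (ContinuousLinearMap.hasStrictFDerivAt (ML E) (x := u)).const_add x
  have hcomp := hdp.comp u hA
  have hlin : HasStrictFDerivAt (fun w : V => mv (Jh a b x) (mv E w))
      ((ML (Jh a b x)) ∘L (ML E)) u :=
    ContinuousLinearMap.hasStrictFDerivAt ((ML (Jh a b x)) ∘L (ML E)) (x := u)
  have hg : HasStrictFDerivAt (gRem a b x E)
      ((ML (Jh a b p)) ∘L (ML E) - (ML (Jh a b x)) ∘L (ML E)) u :=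
    (hcomp.sub_const (hMeas a b x)).sub hlin
  set M : Matrix (Fin 2) (Fin 2) ℝ := (Jh a b p - Jh a b x) * E with hMdef
  have hKM : (ML (Jh a b p)) ∘L (ML E) - (ML (Jh a b x)) ∘L (ML E) = ML M := by
    ext v i
    show (ML (Jh a b p)) (ML E v) i - (ML (Jh a b x)) (ML E v) i = ML M v i
    simp only [ML_apply, hMdef, Matrix.mul_apply, Matrix.sub_apply, Fin.sum_univ_two]
    ring
  -- cross product is nonzero
  have hp0 : p 0 = x 0 + (E 0 0 * u 0 + E 0 1 * u 1) := by
    show x 0 + (E.mulVec u) 0 = _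
    congr 1
    show dotProduct (E 0) u = _
    simp [dotProduct, Fin.sum_univ_two]
  have hp1 : p 1 = x 1 + (E 1 0 * u 0 + E 1 1 * u 1) := by
    show x 1 + (E.mulVec u) 1 = _
    congr 1
    show dotProduct (E 1) u = _
    simp [dotProduct, Fin.sum_univ_two]
  have hC : (p 0 - a) * (x 1 - b) - (p 1 - b) * (x 0 - a) = c * u 0 + d * u 1 := by
    rw [hp0, hp1, hc, hd]; ring
  have hCne : (p 0 - a) * (x 1 - b) - (p 1 - b) * (x 0 - a) ≠ 0 := by
    rw [hC]; exact hcd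
  -- determinant of the difference Jacobian
  have hdetJ : (Jh a b p - Jh a b x).det =
      ((p 0 - a) / rr a b p - (x 0 - a) / rr a b x) *
        ((p 0 - a) / rr a b p ^ 2 - (x 0 - a) / rr a b x ^ 2) -
      ((p 1 - b) / rr a b p - (x 1 - b) / rr a b x) *
        (-(p 1 - b) / rr a b p ^ 2 - -(x 1 - b) / rr a b x ^ 2) := by
    rw [Matrix.det_fin_two]
    simp [Jh, Matrix.sub_apply]
  have hdetJ_ne : (Jh a b p - Jh a b x).det ≠ 0 := by
    rw [hdetJ]
    exact det_diff_ne_zero _ _ _ _ _ _ hs hrx hs2 hr2 hCne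
  have hdetM : M.det ≠ 0 := by
    rw [hMdef, Matrix.det_mul]
    exact mul_ne_zero hdetJ_ne hE.ne'
  have hdetML : (ML M).det ≠ 0 := by rw [ML_det]; exact hdetM
  set e := (ML M).toContinuousLinearEquivOfDetNeZero hdetML with hedef
  have hge : HasStrictFDerivAt (gRem a b x E) (e : V →L[ℝ] V) u := by
    rw [hedef, ContinuousLinearMap.coe_toContinuousLinearEquivOfDetNeZero]
    exact hg.congr_fderiv hKM
  have hmap := hge.map_nhds_eq_of_equiv
  rw [mem_interior_iff_mem_nhds, ← hmap, Filter.mem_map]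
  refine Filter.mem_of_superset
    (Metric.isOpen_ball.mem_nhds (mem_ball_zero_iff.mpr hu)) ?_
  intro v hv
  exact ⟨v, le_of_lt (mem_ball_zero_iff.mp hv), rfl⟩
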